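/- Let γ > 0 and a ∈ ℂ. For every entire function f : ℂ → ℂ one has ∫_ℂ |W_γ^a f(z)|² exp((z − conj(z))²/γ²) dA(z) = ∫_ℂ |f(z)|² exp((z − conj(z))²/γ²) dA(z) (as equality in [0,∞]), and W_γ^{−a}(W_γ^a f) = f. Consequently W_γ^a is an isometric bijection of the RBF space H_γ onto itself with inverse W_γ^{−a}. -/

import Mathlib

open MeasureTheory Complex

/-- The RBF–Weyl operator
`W_γ^a f(z) = exp((a² − |a|²)/γ² + (2/γ²)·z·(conj a − a)) · f(z − a)`. -/
noncomputable def rbfWeyl (γ : ℝ) (a : ℂ) (f : ℂ → ℂ) (z : ℂ) : ℂ :=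
  Complex.exp ((a ^ 2 - ((‖a‖ : ℝ) : ℂ) ^ 2) / (γ : ℂ) ^ 2 +
      (2 / (γ : ℂ) ^ 2) * z * ((starRingEnd ℂ) a - a)) * f (z - a)

lemma rbf_key (γ : ℝ) (hγ : 0 < γ) (a : ℂ) (f : ℂ → ℂ) (z : ℂ) :
    ‖rbfWeyl γ a f z‖ ^ 2 * Real.exp (-(4 * z.im ^ 2) / γ ^ 2)
      = ‖f (z - a)‖ ^ 2 * Real.exp (-(4 * (z - a).im ^ 2) / γ ^ 2) := by
  have hγ2 : (γ:ℝ)^2 ≠ 0 := by positivity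
  set r : ℝ := (-2 * a.im ^ 2 + 4 * a.im * z.im) / γ ^ 2 with hr
  have hre : ((a ^ 2 - ((‖a‖ : ℝ) : ℂ) ^ 2) / (γ : ℂ) ^ 2 +
      (2 / (γ : ℂ) ^ 2) * z * ((starRingEnd ℂ) a - a)).re = r := by
    have hc : ((γ^2 : ℝ) : ℂ) ≠ 0 := by exact_mod_cast hγ2
    have hE : (a ^ 2 - ((‖a‖ : ℝ) : ℂ) ^ 2) / (γ : ℂ) ^ 2 +
        (2 / (γ : ℂ) ^ 2) * z * ((starRingEnd ℂ) a - a)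
        = ((a ^ 2 - ((‖a‖ : ℝ) : ℂ) ^ 2) + 2 * z * ((starRingEnd ℂ) a - a)) /
          ((γ^2 : ℝ) : ℂ) := by
      field_simp
      rw [Complex.ofReal_pow, mul_div_assoc, div_self (by exact_mod_cast hγ2 : (γ : ℂ) ^ 2 ≠ 0), mul_one]
    rw [hE, hr, Complex.div_ofReal_re]
    congr 1
    simp [Complex.sq_norm, Complex.normSq_apply, Complex.mul_re, Complex.mul_im, Complex.sub_re,
      Complex.sub_im, Complex.add_re, Complex.conj_re, Complex.conj_im, pow_two]
    rw [← pow_two ‖a‖, Complex.sq_norm, Complex.normSq_apply]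
    ring
  have hnorm : ‖rbfWeyl γ a f z‖ ^ 2 = Real.exp (2 * r) * ‖f (z - a)‖ ^ 2 := by
    rw [rbfWeyl, norm_mul, mul_pow, Complex.norm_exp, hre,
      pow_two, ← Real.exp_add, ← two_mul]
  have h2 : Real.exp (2 * r) * Real.exp (-(4 * z.im ^ 2) / γ ^ 2)
      = Real.exp (-(4 * (z - a).im ^ 2) / γ ^ 2) := by
    rw [← Real.exp_add]
    congr 1
    simp only [Complex.sub_im, hr]
    field_simp
    ring
  rw [hnorm, mul_right_comm, h2, mul_comm]

theorem rbfWeyl_isometry (γ : ℝ) (hγ : 0 < γ) (a : ℂ) :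
    (∀ f : ℂ → ℂ, Differentiable ℂ f →
      (∫⁻ z : ℂ, ENNReal.ofReal (‖rbfWeyl γ a f z‖ ^ 2 * Real.exp (-(4 * z.im ^ 2) / γ ^ 2))) =
        (∫⁻ z : ℂ, ENNReal.ofReal (‖f z‖ ^ 2 * Real.exp (-(4 * z.im ^ 2) / γ ^ 2)))) ∧
    (∀ f : ℂ → ℂ, Differentiable ℂ f →
      rbfWeyl γ (-a) (rbfWeyl γ a f) = f) := by
  constructor
  · intro f _
    have := lintegral_sub_right_eq_self (μ := (volume : Measure ℂ))
      (fun w : ℂ => ENNReal.ofReal (‖f w‖ ^ 2 * Real.exp (-(4 * w.im ^ 2) / γ ^ 2))) a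
    rw [← this]
    congr 1
    funext z
    rw [rbf_key γ hγ a f z]
  · intro f _
    funext z
    simp only [rbfWeyl]
    simp only [sub_neg_eq_add, add_sub_cancel_right]
    rw [← mul_assoc, ← Complex.exp_add]
    convert one_mul (f z) using 2
    rw [← Complex.exp_zero]
    congr 1
    have hc : a * (starRingEnd ℂ) a = ((‖a‖ : ℝ) : ℂ) ^ 2 := by
      rw [Complex.mul_conj]
      exact_mod_cast (Complex.sq_norm a).symm
    have hγ' : (γ:ℂ) ≠ 0 := by exact_mod_cast hγ.ne'
    simp only [map_neg, norm_neg]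
    field_simp
    linear_combination (2:ℂ) * hc
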